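/- Let R be a commutative ring and suppose R = ∏_{λ∈Λ} R_λ is a direct product of commutative rings each of which is arithmetical. Then R is arithmetical, i.e., for all ideals A, B, C of R, (A + B) ∩ C = (A ∩ C) + (B ∩ C). -/
import Mathlib

/-- Element-wise criterion extracted from ideal distributivity. -/
lemma arith_elem {S : Type*} [CommRing S]
    (h : ∀ A B C : Ideal S, (A ⊔ B) ⊓ C = (A ⊓ C) ⊔ (B ⊓ C)) (a b : S) :
    ∃ u v w : S, u * a = v * b ∧ (1 - u) * b = w * a := by
  have hmem : a + b ∈ (Ideal.span {a} ⊔ Ideal.span {b}) ⊓ Ideal.span {a + b} := by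
    refine ⟨Submodule.add_mem_sup ?_ ?_, Ideal.mem_span_singleton_self _⟩
    · exact Ideal.mem_span_singleton_self _
    · exact Ideal.mem_span_singleton_self _
  rw [h] at hmem
  obtain ⟨x, ⟨hxa, hxc⟩, y, ⟨hyb, hyc⟩, hxy⟩ := Submodule.mem_sup.mp hmem
  obtain ⟨p, hp⟩ := Ideal.mem_span_singleton'.mp hxa
  obtain ⟨s, hs⟩ := Ideal.mem_span_singleton'.mp hxc
  obtain ⟨q, hq⟩ := Ideal.mem_span_singleton'.mp hyb
  refine ⟨1 - s, q + s - 1, p - s, ?_, ?_⟩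
  · linear_combination -hxy - hs - hq
  · linear_combination hs - hp

/-- A direct product of arithmetical commutative rings is arithmetical: if each `R_λ`
satisfies the ideal-distributivity law `(A + B) ∩ C = (A ∩ C) + (B ∩ C)`, then so does
`∏_λ R_λ`. -/
theorem stmt_18 {Λ : Type*} (Rl : Λ → Type*) [∀ l, CommRing (Rl l)]
    (h : ∀ (l : Λ) (A B C : Ideal (Rl l)), (A ⊔ B) ⊓ C = (A ⊓ C) ⊔ (B ⊓ C)) :
    ∀ A B C : Ideal (∀ l, Rl l), (A ⊔ B) ⊓ C = (A ⊓ C) ⊔ (B ⊓ C) := by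
  intro A B C
  refine le_antisymm ?_ ?_
  · rintro x ⟨hab, hc⟩
    obtain ⟨a, ha, b, hb, rfl⟩ := Submodule.mem_sup.mp hab
    have key : ∀ l, ∃ u v w : Rl l, u * a l = v * b l ∧ (1 - u) * b l = w * a l :=
      fun l => arith_elem (h l) (a l) (b l)
    choose u v w huv hw using key
    have h1 : (u : ∀ l, Rl l) * a = v * b := funext huv
    have h2 : ((1 : ∀ l, Rl l) - u) * b = w * a := funext hw
    have hdecomp : a + b = (1 - u) * (a + b) + u * (a + b) := by ring
    rw [hdecomp]
    refine Submodule.add_mem_sup ⟨?_, C.mul_mem_left _ hc⟩ ⟨?_, C.mul_mem_left _ hc⟩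
    · have : (1 - u) * (a + b) = (1 - u + w) * a := by
        linear_combination h2
      rw [this]; exact A.mul_mem_left _ ha
    · have : u * (a + b) = (u + v) * b := by
        linear_combination h1
      rw [this]; exact B.mul_mem_left _ hb
  · exact sup_le (inf_le_inf_right _ le_sup_left) (inf_le_inf_right _ le_sup_right)
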